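/- If the orthogonal projections onto subspaces h₁ and h₂ commute, then for any unit vector s: ⟨s, Π(h₁ ⊔ h₂) s⟩ ≥ (⟨s,Π(h₁)s⟩ + ⟨s,Π(h₂)s⟩)² / (⟨s,Π(h₁)s⟩ + ⟨s,Π(h₂)s⟩ + 2⟨s,Π(h₁ ⊓ h₂)s⟩), provided the denominator is nonzero (quantum Chung–Erdős inequality in the commuting case). -/

import Mathlib

variable {H : Type*} [NormedAddCommGroup H] [InnerProductSpace ℂ H] [FiniteDimensional ℂ H]

/-- The orthogonal projection onto a subspace, as an operator on `H`. -/
noncomputable def projOp (h : Submodule ℂ H) : H →ₗ[ℂ] H :=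
  (h.subtypeL.comp h.orthogonalProjection).toLinearMap

/-- The quantum correction operator `D(h₁,h₂)`. -/
noncomputable def Dop (h₁ h₂ : Submodule ℂ H) : H →ₗ[ℂ] H :=
  projOp (h₁ ⊔ h₂) - projOp h₁ - projOp h₂ + projOp (h₁ ⊓ h₂)

lemma projOp_apply (h : Submodule ℂ H) (x : H) :
    projOp h x = (h.orthogonalProjection x : H) := rfl

lemma projOp_mem (h : Submodule ℂ H) (x : H) : projOp h x ∈ h :=
  (h.orthogonalProjection x).2

lemma projOp_inner_left_eq_right (h : Submodule ℂ H) (x y : H) :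
    (inner ℂ (projOp h x) y : ℂ) = inner ℂ x (projOp h y) :=
  h.inner_starProjection_left_eq_right x y

lemma projOp_of_mem (h : Submodule ℂ H) {x : H} (hx : x ∈ h) : projOp h x = x :=
  h.starProjection_eq_self_iff.2 hx

lemma inner_projOp_self (h : Submodule ℂ H) (x : H) :
    (inner ℂ x (projOp h x) : ℂ) = (‖projOp h x‖ : ℂ) ^ 2 := by
  have : (inner ℂ x (projOp h (projOp h x)) : ℂ) = inner ℂ (projOp h x) (projOp h x) :=
    (projOp_inner_left_eq_right h x (projOp h x)).symm
  rw [projOp_of_mem h (projOp_mem h x)] at this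
  rw [this, inner_self_eq_norm_sq_to_K]; norm_cast

lemma inner_projOp_inf (h₁ h₂ : Submodule ℂ H)
    (hcomm : projOp h₁ ∘ₗ projOp h₂ = projOp h₂ ∘ₗ projOp h₁) (s : H) :
    (inner ℂ s (projOp (h₁ ⊓ h₂) s) : ℂ) = inner ℂ (projOp h₁ s) (projOp h₂ s) := by
  set u := projOp h₁ (projOp h₂ s) with hu
  have hu2 : u = projOp h₂ (projOp h₁ s) := congrFun (congrArg DFunLike.coe hcomm) s
  have hmem : u ∈ h₁ ⊓ h₂ := ⟨projOp_mem _ _, hu2 ▸ projOp_mem _ _⟩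
  have key : projOp (h₁ ⊓ h₂) s = u := by
    rw [projOp_apply]
    apply (h₁ ⊓ h₂).eq_starProjection_of_mem_of_inner_eq_zero hmem
    intro w hw
    have h1 : (inner ℂ u w : ℂ) = inner ℂ (projOp h₂ s) w := by
      rw [hu, projOp_inner_left_eq_right, projOp_of_mem h₁ hw.1]
    have h2 : (inner ℂ (projOp h₂ s) w : ℂ) = inner ℂ s w := by
      rw [projOp_inner_left_eq_right, projOp_of_mem h₂ hw.2]
    rw [inner_sub_left, h1, h2, sub_self]
  rw [key, hu, ← projOp_inner_left_eq_right]

theorem stmt_10 (h₁ h₂ : Submodule ℂ H)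
    (hcomm : projOp h₁ ∘ₗ projOp h₂ = projOp h₂ ∘ₗ projOp h₁)
    (s : H) (hs : ‖s‖ = 1)
    (hden : (inner ℂ s (projOp h₁ s) : ℂ).re + (inner ℂ s (projOp h₂ s) : ℂ).re
        + 2 * (inner ℂ s (projOp (h₁ ⊓ h₂) s) : ℂ).re ≠ 0) :
    (inner ℂ s (projOp (h₁ ⊔ h₂) s) : ℂ).re ≥
      ((inner ℂ s (projOp h₁ s) : ℂ).re + (inner ℂ s (projOp h₂ s) : ℂ).re) ^ 2 /
        ((inner ℂ s (projOp h₁ s) : ℂ).re + (inner ℂ s (projOp h₂ s) : ℂ).re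
          + 2 * (inner ℂ s (projOp (h₁ ⊓ h₂) s) : ℂ).re) := by
  set a := (inner ℂ s (projOp h₁ s) : ℂ).re with ha'
  set b := (inner ℂ s (projOp h₂ s) : ℂ).re with hb'
  set c := (inner ℂ s (projOp (h₁ ⊓ h₂) s) : ℂ).re with hc'
  set p := projOp (h₁ ⊔ h₂) s with hp
  set x := projOp h₁ s + projOp h₂ s with hx
  have hxmem : x ∈ h₁ ⊔ h₂ :=
    Submodule.add_mem _ (le_sup_left (b := h₂) (projOp_mem h₁ s))
      (le_sup_right (a := h₁) (projOp_mem h₂ s))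
  have ha : (‖projOp h₁ s‖ : ℝ) ^ 2 = a := by
    have := congrArg Complex.re (inner_projOp_self h₁ s); simpa [ha', ← Complex.ofReal_pow] using this.symm
  have hb : (‖projOp h₂ s‖ : ℝ) ^ 2 = b := by
    have := congrArg Complex.re (inner_projOp_self h₂ s); simpa [hb', ← Complex.ofReal_pow] using this.symm
  have hc : (inner ℂ (projOp h₁ s) (projOp h₂ s) : ℂ).re = c := by
    rw [hc', inner_projOp_inf h₁ h₂ hcomm s]
  have hxnorm : (‖x‖ : ℝ) ^ 2 = a + b + 2 * c := by
    rw [hx, @norm_add_sq ℂ]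
    rw [ha, hb] at *
    simp only [RCLike.re_to_complex] at *
    rw [hc]; ring
  have hsx : (inner ℂ s x : ℂ).re = a + b := by
    simp [hx, inner_add_right, ha', hb']
  have hpx : (inner ℂ p x : ℂ) = inner ℂ s x := by
    have horth : s - p ∈ (h₁ ⊔ h₂)ᗮ := Submodule.sub_starProjection_mem_orthogonal s
    have h0 : (inner ℂ (s - p) x : ℂ) = 0 := by
      rw [inner_eq_zero_symm]; exact horth x hxmem
    rw [inner_sub_left, sub_eq_zero] at h0
    exact h0.symm
  have hL : (inner ℂ s p : ℂ).re = ‖p‖ ^ 2 := by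
    have := congrArg Complex.re (inner_projOp_self (h₁ ⊔ h₂) s)
    simpa [hp, ← Complex.ofReal_pow] using this
  have hCS : (a + b) ^ 2 ≤ (inner ℂ s p : ℂ).re * (a + b + 2 * c) := by
    have h1 : (a + b) ^ 2 = ((inner ℂ p x : ℂ).re) ^ 2 := by rw [hpx, hsx]
    have h2 : ((inner ℂ p x : ℂ).re) ^ 2 ≤ ‖(inner ℂ p x : ℂ)‖ ^ 2 := by
      rw [← sq_abs]
      exact pow_le_pow_left₀ (abs_nonneg _) (Complex.abs_re_le_norm _) 2
    have h3 : ‖(inner ℂ p x : ℂ)‖ ^ 2 ≤ (‖p‖ * ‖x‖) ^ 2 :=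
      pow_le_pow_left₀ (norm_nonneg _) (norm_inner_le_norm p x) 2
    calc (a + b) ^ 2 ≤ (‖p‖ * ‖x‖) ^ 2 := by rw [h1]; exact le_trans h2 h3
      _ = ‖p‖ ^ 2 * ‖x‖ ^ 2 := by ring
      _ = (inner ℂ s p : ℂ).re * (a + b + 2 * c) := by rw [hL, hxnorm]
  have hd0 : 0 ≤ a + b + 2 * c := hxnorm ▸ sq_nonneg ‖x‖
  have hdpos : 0 < a + b + 2 * c := lt_of_le_of_ne hd0 (Ne.symm hden)
  rw [ge_iff_le, div_le_iff₀ hdpos]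
  exact hCS
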